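/- Let d, N ≥ 1 be integers and λ₀ ≥ 1 a real. Let G_1,…,G_N be symmetric positive semidefinite d×d real matrices each of whose eigenvalues is at most 1 (equivalently, G_n ≼ I_d), and define M_0 := λ₀·I_d and M_n := M_{n−1} + G_n for n = 1,…,N (each M_n is positive definite, hence invertible). Then Σ_{n=1}^{N} Tr( G_n · M_{n−1}^{-1} ) ≤ 2·log det(M_N) − 2·log det(λ₀·I_d). -/

import Mathlib

open Finset Matrix RealInnerProductSpace

private lemma half_le_log_one_add {x : ℝ} (h0 : 0 ≤ x) (h1 : x ≤ 1) :
    x ≤ 2 * Real.log (1 + x) := by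
  have hx : (0:ℝ) < 1 + x := by linarith
  have h := Real.log_le_sub_one_of_pos (x := (1+x)⁻¹) (by positivity)
  rw [Real.log_inv] at h
  have hinv : (1+x) * (1+x)⁻¹ = 1 := mul_inv_cancel₀ hx.ne'
  nlinarith [mul_nonneg h0 (sub_nonneg.2 h1)]

private lemma telescope_fin {N : ℕ} (f : Fin (N+1) → ℝ) :
    ∑ k : Fin N, (f k.succ - f k.castSucc) = f (Fin.last N) - f 0 := by
  induction N with
  | zero => simp
  | succ n ih =>
    rw [Fin.sum_univ_castSucc]
    have h := ih (fun i => f i.castSucc)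
    simp only [Fin.succ_castSucc] at h ⊢
    rw [h]
    simp [Fin.succ_last]

private lemma eig_le_one {n : Type*} [Fintype n] [DecidableEq n] {C : Matrix n n ℝ}
    (hC : C.IsHermitian) (h1 : ((1 : Matrix n n ℝ) - C).PosSemidef) (i : n) :
    hC.eigenvalues i ≤ 1 := by
  have hv := hC.eigenvalues_eq i
  have hq := h1.dotProduct_mulVec_nonneg ⇑(hC.eigenvectorBasis i)
  have h2 : ⟪hC.eigenvectorBasis i, hC.eigenvectorBasis i⟫ = (1:ℝ) := by
    rw [real_inner_self_eq_norm_sq, hC.eigenvectorBasis.orthonormal.1 i]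
    norm_num
  rw [EuclideanSpace.inner_eq_star_dotProduct] at h2
  rw [sub_mulVec, one_mulVec, dotProduct_sub] at hq
  simp only [RCLike.star_def, RCLike.re_to_real] at h2 hq hv
  rw [dotProduct_comm] at h2
  linarith [hq, le_of_eq hv, le_of_eq h2]

private lemma trace_eq_sum_eigs {n : Type*} [Fintype n] [DecidableEq n] {C : Matrix n n ℝ}
    (hC : C.IsHermitian) : C.trace = ∑ i, hC.eigenvalues i := by
  conv_lhs => rw [hC.spectral_theorem, Unitary.conjStarAlgAut_apply]
  rw [trace_mul_cycle]
  rw [show star (hC.eigenvectorUnitary : Matrix n n ℝ) * (hC.eigenvectorUnitary : Matrix n n ℝ)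
        * diagonal (RCLike.ofReal ∘ hC.eigenvalues) = diagonal (RCLike.ofReal ∘ hC.eigenvalues) by
    rw [Unitary.coe_star_mul_self, one_mul]]
  simp [trace_diagonal]

private lemma det_one_add_eq {n : Type*} [Fintype n] [DecidableEq n] {C : Matrix n n ℝ}
    (hC : C.IsHermitian) :
    ((1 : Matrix n n ℝ) + C).det = ∏ i, (1 + hC.eigenvalues i) := by
  have hU1 : (hC.eigenvectorUnitary : Matrix n n ℝ) * star (hC.eigenvectorUnitary : Matrix n n ℝ) = 1 :=
    Unitary.coe_mul_star_self _
  have hkey : (1 : Matrix n n ℝ) + C =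
      (hC.eigenvectorUnitary : Matrix n n ℝ) *
        (1 + diagonal (RCLike.ofReal ∘ hC.eigenvalues)) *
        star (hC.eigenvectorUnitary : Matrix n n ℝ) := by
    rw [mul_add, add_mul, mul_one, hU1, ← Unitary.conjStarAlgAut_apply (S := ℝ), ← hC.spectral_theorem]
  rw [hkey, det_mul, det_mul]
  rw [mul_right_comm, ← det_mul, hU1, det_one, one_mul]
  rw [show (1 : Matrix n n ℝ) + diagonal (RCLike.ofReal ∘ hC.eigenvalues)
      = diagonal (fun i => 1 + hC.eigenvalues i) by
    rw [← diagonal_one, ← diagonal_add]; congr 1]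
  rw [det_diagonal]

open scoped MatrixOrder in
private lemma step_bound {n : Type*} [Fintype n] [DecidableEq n] {A G : Matrix n n ℝ}
    (hA : A.PosDef) (hA1 : (A - 1).PosSemidef) (hG : G.PosSemidef)
    (hG1 : ((1 : Matrix n n ℝ) - G).PosSemidef) :
    (G * A⁻¹).trace ≤ 2 * Real.log (A + G).det - 2 * Real.log A.det := by
  set S := CFC.sqrt A with hSdef
  have hS : S.PosSemidef := (CFC.sqrt_nonneg A).posSemidef
  have hSS : S * S = A := CFC.sqrt_mul_sqrt_self A hA.posSemidef.nonneg
  have hAdet := hA.det_pos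
  have hSdet : S.det ≠ 0 := by
    intro h
    have : S.det * S.det = A.det := by rw [← det_mul, hSS]
    rw [h, mul_zero] at this
    exact hAdet.ne this
  have hSunit : IsUnit S.det := isUnit_iff_ne_zero.mpr hSdet
  have hSinv : S * S⁻¹ = 1 := mul_nonsing_inv _ hSunit
  have hSinv' : S⁻¹ * S = 1 := nonsing_inv_mul _ hSunit
  have hSH : Sᴴ = S := hS.1
  have hSinvH : (S⁻¹)ᴴ = S⁻¹ := by rw [conjTranspose_nonsing_inv, hSH]
  set C := S⁻¹ * G * S⁻¹ with hCdef
  have hC : C.PosSemidef := by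
    have h := hG.mul_mul_conjTranspose_same S⁻¹
    rwa [hSinvH] at h
  have hSAS : S⁻¹ * A * S⁻¹ = 1 := by
    rw [← hSS, ← mul_assoc, hSinv', one_mul, hSinv]
  have hAG : (A - G).PosSemidef := by
    have h := hA1.add hG1
    rwa [sub_add_sub_cancel] at h
  have h1C : ((1 : Matrix n n ℝ) - C).PosSemidef := by
    have h := hAG.mul_mul_conjTranspose_same S⁻¹
    rw [hSinvH] at h
    rwa [mul_sub, sub_mul, hSAS] at h
  have htrace : (G * A⁻¹).trace = C.trace := by
    rw [← hSS, Matrix.mul_inv_rev, ← mul_assoc, trace_mul_cycle]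
  have hSCS : S * C * S = G := by
    have h : S * C * S = (S * S⁻¹) * G * (S⁻¹ * S) := by
      simp only [hCdef, mul_assoc]
    rw [h, hSinv, hSinv', one_mul, mul_one]
  have hkey : A + G = S * (1 + C) * S := by
    rw [mul_add, add_mul, mul_one, hSS, hSCS]
  have h1Cpos : ((1 : Matrix n n ℝ) + C).PosDef := Matrix.PosDef.one.add_posSemidef hC
  have hdet : (A + G).det = A.det * (1 + C).det := by
    rw [hkey, det_mul, det_mul, mul_right_comm, ← det_mul, hSS]
  rw [hdet, Real.log_mul hAdet.ne' h1Cpos.det_pos.ne', htrace]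
  ring_nf
  rw [det_one_add_eq hC.1, Real.log_prod
    (fun i _ => by have := hC.eigenvalues_nonneg i; positivity)]
  rw [trace_eq_sum_eigs hC.1, Finset.sum_mul]
  refine Finset.sum_le_sum fun i _ => ?_
  rw [mul_comm]
  exact half_le_log_one_add (hC.eigenvalues_nonneg i) (eig_le_one hC.1 h1C i)

/-- Matrix elliptical-potential inequality (Lemma `reduction`). -/
theorem elliptical_potential_reduction
    {d N : ℕ} (hd : 1 ≤ d) (hN : 1 ≤ N)
    {lam0 : ℝ} (hlam0 : 1 ≤ lam0)
    (G : Fin N → Matrix (Fin d) (Fin d) ℝ)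
    (hpsd : ∀ k, (G k).PosSemidef)
    (hle : ∀ k, ((1 : Matrix (Fin d) (Fin d) ℝ) - G k).PosSemidef)
    (Mm : Fin (N + 1) → Matrix (Fin d) (Fin d) ℝ)
    (hM0 : Mm 0 = lam0 • (1 : Matrix (Fin d) (Fin d) ℝ))
    (hMrec : ∀ k : Fin N, Mm k.succ = Mm k.castSucc + G k) :
    (∑ k : Fin N, (G k * (Mm k.castSucc)⁻¹).trace) ≤
      2 * Real.log (Mm (Fin.last N)).det -
        2 * Real.log (lam0 • (1 : Matrix (Fin d) (Fin d) ℝ)).det := by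
  have key : ∀ k : Fin (N+1), ((Mm k) - 1).PosSemidef := by
    intro k
    induction k using Fin.induction with
    | zero =>
      rw [hM0]
      rw [show lam0 • (1 : Matrix (Fin d) (Fin d) ℝ) - 1 = (lam0 - 1) • 1 by
        rw [sub_smul, one_smul]]
      rw [smul_one_eq_diagonal]
      exact Matrix.PosSemidef.diagonal fun i => sub_nonneg.2 hlam0
    | succ k ih =>
      rw [hMrec k]
      have h := ih.add (hpsd k)
      rwa [sub_add_eq_add_sub] at h
  have hpos : ∀ k : Fin (N+1), (Mm k).PosDef := by
    intro k
    have h : Mm k = 1 + (Mm k - 1) := by abel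
    rw [h]
    exact Matrix.PosDef.one.add_posSemidef (key k)
  have hstep : ∀ k : Fin N, (G k * (Mm k.castSucc)⁻¹).trace ≤
      2 * Real.log (Mm k.succ).det - 2 * Real.log (Mm k.castSucc).det := by
    intro k
    rw [hMrec k]
    exact step_bound (hpos k.castSucc) (key k.castSucc) (hpsd k) (hle k)
  calc (∑ k : Fin N, (G k * (Mm k.castSucc)⁻¹).trace)
      ≤ ∑ k : Fin N, (2 * Real.log (Mm k.succ).det - 2 * Real.log (Mm k.castSucc).det) :=
        Finset.sum_le_sum fun k _ => hstep k
    _ = 2 * Real.log (Mm (Fin.last N)).det - 2 * Real.log (Mm 0).det :=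
        telescope_fin (fun k => 2 * Real.log (Mm k).det)
    _ = _ := by rw [hM0]
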